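/- Let α ∈ ℝ, μ > 0, c > 0, x₀ ∈ ℝ, and set k = ½ √( c / (μ(1+c)) ) and v = α(1+c). Define u(x,t) = 3c · sech²( k (x − v t − x₀) ), where sech z = 1/cosh z. Then u satisfies the one-dimensional regularized long-wave equation ∂ₜu + α ∂ₓu + α u ∂ₓu − μ ∂ₓₓₜu = 0 for all x ∈ ℝ and t ∈ ℝ. -/

import Mathlib

open Real


/-- the sech² solitary wave solves the 1D regularized long-wave equation. -/
theorem rlw1d_solitary_wave_solution
    (α μ c x₀ : ℝ) (hμ : 0 < μ) (hc : 0 < c)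
    (k v : ℝ)
    (hk : k = (1/2) * Real.sqrt (c / (μ * (1 + c))))
    (hv : v = α * (1 + c))
    (u : ℝ → ℝ → ℝ)
    (hu : ∀ x t, u x t = 3 * c * (1 / Real.cosh (k * (x - v * t - x₀)))^2) :
    ∀ x t : ℝ,
      deriv (fun s => u x s) t
        + α * deriv (fun a => u a t) x
        + α * u x t * deriv (fun a => u a t) x
        - μ * deriv (fun s => deriv (fun a => deriv (fun b => u b s) a) x) t = 0 := by
  have hCne : ∀ z : ℝ, Real.cosh z ≠ 0 := fun z => (Real.cosh_pos z).ne'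
  -- G0 = 3c sech², G0' 
  have hG0 : ∀ z : ℝ, HasDerivAt (fun w => 3*c/(Real.cosh w)^2)
      (-6*c*Real.sinh z/(Real.cosh z)^3) z := by
    intro z
    have h1 : HasDerivAt (fun w => (Real.cosh w)^2) (2*(Real.cosh z)^1 * Real.sinh z) z :=
      (Real.hasDerivAt_cosh z).pow 2
    have h2 : HasDerivAt (fun w => 3*c/(Real.cosh w)^2) _ z := (hasDerivAt_const z (3*c)).div h1 (pow_ne_zero 2 (hCne z))
    convert h2 using 1
    have := hCne z
    field_simp
    ring
  -- G1 = -6c sinh/cosh³, G1'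
  have hG1 : ∀ z : ℝ, HasDerivAt (fun w => -6*c*Real.sinh w/(Real.cosh w)^3)
      (-6*c/(Real.cosh z)^2 + 18*c*(Real.sinh z)^2/(Real.cosh z)^4) z := by
    intro z
    have hn : HasDerivAt (fun w => -6*c*Real.sinh w) (-6*c*Real.cosh z) z :=
      (Real.hasDerivAt_sinh z).const_mul (-6*c)
    have hd : HasDerivAt (fun w => (Real.cosh w)^3) (3*(Real.cosh z)^2 * Real.sinh z) z :=
      (Real.hasDerivAt_cosh z).pow 3
    have h2 : HasDerivAt (fun w => -6*c*Real.sinh w/(Real.cosh w)^3) _ z := hn.div hd (pow_ne_zero 3 (hCne z))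
    convert h2 using 1
    have := hCne z
    field_simp
    ring
  -- G2 = G1', G2'
  have hG2 : ∀ z : ℝ, HasDerivAt (fun w => -6*c/(Real.cosh w)^2 + 18*c*(Real.sinh w)^2/(Real.cosh w)^4)
      (48*c*Real.sinh z/(Real.cosh z)^3 - 72*c*(Real.sinh z)^3/(Real.cosh z)^5) z := by
    intro z
    have h1 : HasDerivAt (fun w => -6*c/(Real.cosh w)^2)
        (12*c*Real.sinh z/(Real.cosh z)^3) z := by
      have hd : HasDerivAt (fun w => (Real.cosh w)^2) (2*(Real.cosh z)^1 * Real.sinh z) z :=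
        (Real.hasDerivAt_cosh z).pow 2
      have h2 : HasDerivAt (fun w => -6*c/(Real.cosh w)^2) _ z := (hasDerivAt_const z (-6*c)).div hd (pow_ne_zero 2 (hCne z))
      convert h2 using 1
      have := hCne z
      field_simp
      ring
    have h2 : HasDerivAt (fun w => 18*c*(Real.sinh w)^2/(Real.cosh w)^4)
        (36*c*Real.sinh z/(Real.cosh z)^3 - 72*c*(Real.sinh z)^3/(Real.cosh z)^5) z := by
      have hn : HasDerivAt (fun w => 18*c*(Real.sinh w)^2)
          (18*c*(2*(Real.sinh z)^1*Real.cosh z)) z :=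
        ((Real.hasDerivAt_sinh z).pow 2).const_mul (18*c)
      have hd : HasDerivAt (fun w => (Real.cosh w)^4) (4*(Real.cosh z)^3 * Real.sinh z) z :=
        (Real.hasDerivAt_cosh z).pow 4
      have h3 : HasDerivAt (fun w => 18*c*(Real.sinh w)^2/(Real.cosh w)^4) _ z := hn.div hd (pow_ne_zero 4 (hCne z))
      convert h3 using 1
      have := hCne z
      field_simp
      ring
    have : HasDerivAt (fun w => -6*c/(Real.cosh w)^2 + 18*c*(Real.sinh w)^2/(Real.cosh w)^4) _ z := h1.add h2
    convert this using 1
    ring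
  -- affine maps
  have haffx : ∀ a s : ℝ, HasDerivAt (fun b => k*(b - v*s - x₀)) k a := by
    intro a s
    simpa using (((hasDerivAt_id a).sub_const (v*s)).sub_const x₀).const_mul k
  have hafft : ∀ a s : ℝ, HasDerivAt (fun r => k*(a - v*r - x₀)) (-(k*v)) s := by
    intro a s
    have h : HasDerivAt (fun r => a - v*r - x₀) (-v) s := by
      simpa using (((hasDerivAt_id s).const_mul v).const_sub a).sub_const x₀
    simpa [mul_comm, mul_assoc, mul_left_comm] using h.const_mul k
  -- u as composition
  have hufun : ∀ s : ℝ, (fun b => u b s) = fun b => 3*c/(Real.cosh (k*(b - v*s - x₀)))^2 := by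
    intro s; funext b; rw [hu, div_pow, one_pow, mul_one_div]
  have hufunt : ∀ a : ℝ, (fun s => u a s) = fun s => 3*c/(Real.cosh (k*(a - v*s - x₀)))^2 := by
    intro a; funext s; rw [hu, div_pow, one_pow, mul_one_div]
  -- ∂ₓ u
  have hdx : ∀ a s : ℝ, HasDerivAt (fun b => u b s)
      (-6*c*Real.sinh (k*(a - v*s - x₀))/(Real.cosh (k*(a - v*s - x₀)))^3 * k) a := by
    intro a s
    rw [hufun s]
    have h := (hG0 (k*(a - v*s - x₀))).comp a (haffx a s)
    exact h
  have hdx' : ∀ a s : ℝ, deriv (fun b => u b s) a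
      = -6*c*Real.sinh (k*(a - v*s - x₀))/(Real.cosh (k*(a - v*s - x₀)))^3 * k := fun a s =>
    (hdx a s).deriv
  -- ∂ₜ u
  have hdt : ∀ a s : ℝ, HasDerivAt (fun r => u a r)
      (-6*c*Real.sinh (k*(a - v*s - x₀))/(Real.cosh (k*(a - v*s - x₀)))^3 * -(k*v)) s := by
    intro a s
    rw [hufunt a]
    have h := (hG0 (k*(a - v*s - x₀))).comp s (hafft a s)
    exact h
  -- ∂ₓₓ u
  have hdxx : ∀ a s : ℝ, HasDerivAt (fun b => deriv (fun y => u y s) b)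
      ((-6*c/(Real.cosh (k*(a - v*s - x₀)))^2
        + 18*c*(Real.sinh (k*(a - v*s - x₀)))^2/(Real.cosh (k*(a - v*s - x₀)))^4) * k * k) a := by
    intro a s
    have hfe : (fun b => deriv (fun y => u y s) b)
        = fun b => (-6*c*Real.sinh (k*(b - v*s - x₀))/(Real.cosh (k*(b - v*s - x₀)))^3) * k := by
      funext b; exact hdx' b s
    rw [hfe]
    exact (((hG1 (k*(a - v*s - x₀))).comp a (haffx a s)).mul_const k)
  have hdxx' : ∀ a s : ℝ, deriv (fun b => deriv (fun y => u y s) b) a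
      = (-6*c/(Real.cosh (k*(a - v*s - x₀)))^2
        + 18*c*(Real.sinh (k*(a - v*s - x₀)))^2/(Real.cosh (k*(a - v*s - x₀)))^4) * k * k :=
    fun a s => (hdxx a s).deriv
  -- ∂ₜ ∂ₓₓ u at fixed x
  intro x t
  have hdxxt : HasDerivAt (fun s => deriv (fun a => deriv (fun b => u b s) a) x)
      ((48*c*Real.sinh (k*(x - v*t - x₀))/(Real.cosh (k*(x - v*t - x₀)))^3
        - 72*c*(Real.sinh (k*(x - v*t - x₀)))^3/(Real.cosh (k*(x - v*t - x₀)))^5)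
        * -(k*v) * k * k) t := by
    have hfe : (fun s => deriv (fun a => deriv (fun b => u b s) a) x)
        = fun s => (-6*c/(Real.cosh (k*(x - v*s - x₀)))^2
          + 18*c*(Real.sinh (k*(x - v*s - x₀)))^2/(Real.cosh (k*(x - v*s - x₀)))^4) * k * k := by
      funext s; exact hdxx' x s
    rw [hfe]
    exact ((((hG2 (k*(x - v*t - x₀))).comp t (hafft x t)).mul_const k).mul_const k)
  -- assemble
  rw [(hdt x t).deriv, hdx' x t, hdxxt.deriv, hu x t]
  set z := k*(x - v*t - x₀) with hz
  have hk2 : k^2 = c / (4*(μ*(1+c))) := by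
    have h1c : (0:ℝ) < 1 + c := by linarith
    rw [hk, mul_pow, sq_sqrt (by positivity : (0:ℝ) ≤ c / (μ*(1+c)))]
    field_simp
    norm_num
  have hcsq : Real.cosh z ^ 2 = Real.sinh z ^ 2 + 1 := Real.cosh_sq z
  have h1c : (1:ℝ) + c ≠ 0 := by positivity
  have hCz := hCne z
  have hμ' := hμ.ne'
  have hkk : 4*(μ*(1+c))*k^2 = c := by rw [hk2]; field_simp
  rw [hv]
  field_simp
  linear_combination (c*Real.sinh z*k*α*(6*c+48*k^2*(1+c)*μ)) * hcsq
    + (c*Real.sinh z*k*α*(12-6*Real.sinh z^2)) * hkk
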